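/- Let m be a positive even integer, let W be a multiset of 3m positive integers, and let G = (m/2)·K_{3,3} be the disjoint union of m/2 copies of the complete bipartite graph K_{3,3}. Then G is W-fair if and only if W can be partitioned into m multisets W_1, …, W_m, each of size 3, such that ∑ W_i = (∑ W)/m for every i ∈ [m]. -/

import Mathlib

open scoped Classical

lemma sum_sing {α β : Type*} (s : Finset α) (f : α → β) :
    ∑ x ∈ s, ({f x} : Multiset β) = s.val.map f := by
  induction s using Finset.induction with
  | empty => simp
  | insert _ _ h ih => simp_all [Finset.sum_insert h]

lemma list_sum_get {α : Type*} (l : List α) :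
    ∑ j : Fin l.length, ({l.get j} : Multiset α) = (l : Multiset α) := by
  rw [sum_sing]
  have : (Finset.univ : Finset (Fin l.length)).val = ↑(List.finRange l.length) := rfl
  rw [this, Multiset.map_coe, List.map_get_finRange]

noncomputable def mget (S : Multiset ℕ) (hS : Multiset.card S = 3) (j : Fin 3) : ℕ :=
  S.toList.get (Fin.cast (by simp [hS]) j)

lemma mget_sum_sing (S : Multiset ℕ) (hS : Multiset.card S = 3) :
    ∑ j : Fin 3, ({mget S hS j} : Multiset ℕ) = S := by
  have h3 : (3 : ℕ) = S.toList.length := by simp [hS]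
  calc ∑ j : Fin 3, ({mget S hS j} : Multiset ℕ)
      = ∑ j : Fin S.toList.length, ({S.toList.get j} : Multiset ℕ) :=
        Fintype.sum_equiv (finCongr h3) _ _ (fun j => rfl)
    _ = (S.toList : Multiset ℕ) := list_sum_get _
    _ = S := S.coe_toList

lemma mget_sum (S : Multiset ℕ) (hS : Multiset.card S = 3) :
    ∑ j : Fin 3, mget S hS j = S.sum := by
  have := congrArg Multiset.sum (mget_sum_sing S hS)
  rwa [← Multiset.coe_sumAddMonoidHom, map_sum, Multiset.coe_sumAddMonoidHom] at this

/-- Sum of labels over the open neighborhood of `v`. -/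
noncomputable def nbrSum {V : Type*} [Fintype V] (G : SimpleGraph V) (f : V → ℕ) (v : V) : ℕ :=
  ∑ u : V, if G.Adj v u then f u else 0

/-- `f` is a bijective labeling of `G` by the multiset `S` witnessing fairness constant `k`. -/
def IsFairLabeling {V : Type*} [Fintype V] (G : SimpleGraph V) (S : Multiset ℕ)
    (f : V → ℕ) (k : ℕ) : Prop :=
  Finset.univ.val.map f = S ∧ ∀ v : V, nbrSum G f v = k

/-- `G` is `S`-fair. -/
def IsFair {V : Type*} [Fintype V] (G : SimpleGraph V) (S : Multiset ℕ) : Prop :=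
  ∃ (f : V → ℕ) (k : ℕ), IsFairLabeling G S f k

/-- The disjoint union of `t` vertex-disjoint copies of the graph `H`. -/
def copies (t : ℕ) {W : Type*} (H : SimpleGraph W) : SimpleGraph (Fin t × W) where
  Adj x y := x.1 = y.1 ∧ H.Adj x.2 y.2
  symm := ⟨fun _ _ h => ⟨h.1.symm, h.2.symm⟩⟩
  loopless := ⟨fun x h => H.loopless.irrefl x.2 h.2⟩

lemma copies_adj {t : ℕ} {W : Type*} (H : SimpleGraph W) (x y : Fin t × W) :
    (copies t H).Adj x y ↔ x.1 = y.1 ∧ H.Adj x.2 y.2 := Iff.rfl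

abbrev K33 := completeBipartiteGraph (Fin 3) (Fin 3)

/-- Neighborhood sum at a left vertex. -/
lemma nbr_left {t : ℕ} (f : Fin t × (Fin 3 ⊕ Fin 3) → ℕ) (c : Fin t) (j : Fin 3) :
    nbrSum (copies t K33) f (c, Sum.inl j) = ∑ j' : Fin 3, f (c, Sum.inr j') := by
  unfold nbrSum
  rw [Fintype.sum_prod_type]
  simp only [Fintype.sum_sum_type, copies_adj, completeBipartiteGraph_adj]
  simp [Finset.sum_ite_eq]

lemma nbr_right {t : ℕ} (f : Fin t × (Fin 3 ⊕ Fin 3) → ℕ) (c : Fin t) (j : Fin 3) :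
    nbrSum (copies t K33) f (c, Sum.inr j) = ∑ j' : Fin 3, f (c, Sum.inl j') := by
  unfold nbrSum
  rw [Fintype.sum_prod_type]
  simp only [Fintype.sum_sum_type, copies_adj, completeBipartiteGraph_adj]
  simp [Finset.sum_ite_eq]

/-- for even `m`, the disjoint union of `m/2` copies of `K_{3,3}` is
`W`-fair iff `W` partitions into `m` triples each of sum `(∑ W)/m`. -/
theorem stmt_10 (m : ℕ) (hm : 0 < m) (hme : 2 ∣ m)
    (W : Multiset ℕ) (hWpos : ∀ w ∈ W, 0 < w) (hWcard : Multiset.card W = 3 * m) :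
    IsFair (copies (m / 2) (completeBipartiteGraph (Fin 3) (Fin 3))) W ↔
      ∃ P : Fin m → Multiset ℕ,
        (∑ i : Fin m, P i) = W ∧
        (∀ i : Fin m, Multiset.card (P i) = 3) ∧
        (∀ i : Fin m, (P i).sum = W.sum / m) := by
  set t := m / 2 with ht
  have ht2 : t * 2 = m := Nat.div_mul_cancel hme
  let e : Fin t × Bool ≃ Fin m :=
    (Equiv.prodCongr (Equiv.refl (Fin t)) finTwoEquiv.symm).trans
      (finProdFinEquiv.trans (finCongr ht2))
  constructor
  · rintro ⟨f, k, hf, hfair⟩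
    -- the multiset of labels on side (c,b)
    set Q : Fin t × Bool → Multiset ℕ := fun p =>
      Finset.univ.val.map (fun j : Fin 3 => f (p.1, if p.2 then Sum.inr j else Sum.inl j)) with hQ
    have hQcard : ∀ p, Multiset.card (Q p) = 3 := by intro p; simp [hQ]
    have hQsum : ∀ p, (Q p).sum = k := by
      rintro ⟨c, b⟩
      cases b
      · have := hfair (c, Sum.inr 0)
        rw [nbr_right, Finset.sum_eq_multiset_sum] at this
        exact this
      · have := hfair (c, Sum.inl 0)
        rw [nbr_left, Finset.sum_eq_multiset_sum] at this
        exact this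
    have hQtot : ∑ p : Fin t × Bool, Q p = W := by
      rw [← hf]
      have : ∀ p : Fin t × Bool, Q p =
          ∑ j : Fin 3, ({f (p.1, if p.2 then Sum.inr j else Sum.inl j)} : Multiset ℕ) := by
        intro p; rw [sum_sing]
      calc ∑ p : Fin t × Bool, Q p
          = ∑ c : Fin t, ∑ b : Bool,
              ∑ j : Fin 3, ({f (c, if b then Sum.inr j else Sum.inl j)} : Multiset ℕ) := by
            rw [Fintype.sum_prod_type]; exact Finset.sum_congr rfl fun c _ =>
              Finset.sum_congr rfl fun b _ => this (c, b)
        _ = ∑ v : Fin t × (Fin 3 ⊕ Fin 3), ({f v} : Multiset ℕ) := by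
            rw [Fintype.sum_prod_type]
            refine Finset.sum_congr rfl fun c _ => ?_
            rw [Fintype.sum_sum_type, Fintype.sum_bool]
            simp only [if_true, if_false]
            exact add_comm _ _
        _ = Finset.univ.val.map f := sum_sing _ _
    have hWsum : W.sum = m * k := by
      have := congrArg Multiset.sum hQtot
      rw [← Multiset.coe_sumAddMonoidHom, map_sum] at this
      simp only [Multiset.coe_sumAddMonoidHom] at this
      rw [← this]
      calc ∑ p : Fin t × Bool, (Q p).sum
          = ∑ _p : Fin t × Bool, k := Finset.sum_congr rfl (fun p _ => hQsum p)
        _ = (Fintype.card (Fin t × Bool)) * k := by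
            rw [Finset.sum_const, Finset.card_univ, smul_eq_mul]
        _ = m * k := by rw [Fintype.card_prod, Fintype.card_fin, Fintype.card_bool, ht2]
    have hk : W.sum / m = k := by rw [hWsum, Nat.mul_div_cancel_left _ hm]
    refine ⟨Q ∘ e.symm, ?_, fun i => hQcard _, fun i => by rw [hk]; exact hQsum _⟩
    rw [← hQtot]
    exact Fintype.sum_equiv e.symm (fun i => (Q ∘ e.symm) i) Q (fun i => rfl)
  · rintro ⟨P, hPtot, hPcard, hPsum⟩
    set g : Fin m → Fin 3 → ℕ := fun i => mget (P i) (hPcard i) with hg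
    set f : Fin t × (Fin 3 ⊕ Fin 3) → ℕ := fun v =>
      Sum.elim (fun j => g (e (v.1, false)) j) (fun j => g (e (v.1, true)) j) v.2 with hfdef
    refine ⟨f, W.sum / m, ?_, ?_⟩
    · -- label multiset is W
      calc Finset.univ.val.map f
          = ∑ v : Fin t × (Fin 3 ⊕ Fin 3), ({f v} : Multiset ℕ) := (sum_sing _ _).symm
        _ = ∑ c : Fin t, (P (e (c, false)) + P (e (c, true))) := by
            rw [Fintype.sum_prod_type]
            refine Finset.sum_congr rfl fun c _ => ?_
            rw [Fintype.sum_sum_type]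
            rw [show (∑ j : Fin 3, ({f (c, Sum.inl j)} : Multiset ℕ)) = P (e (c, false)) from
              mget_sum_sing _ (hPcard _),
              show (∑ j : Fin 3, ({f (c, Sum.inr j)} : Multiset ℕ)) = P (e (c, true)) from
              mget_sum_sing _ (hPcard _)]
        _ = ∑ p : Fin t × Bool, P (e p) := by
            rw [Fintype.sum_prod_type]
            exact Finset.sum_congr rfl fun c _ => by rw [Fintype.sum_bool]; rw [add_comm]
        _ = ∑ i : Fin m, P i := Fintype.sum_equiv e _ _ (fun p => rfl)
        _ = W := hPtot
    · rintro ⟨c, x⟩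
      cases x with
      | inl j =>
        rw [nbr_left]
        rw [show (∑ j' : Fin 3, f (c, Sum.inr j')) = (P (e (c, true))).sum from mget_sum _ (hPcard _)]
        exact hPsum _
      | inr j =>
        rw [nbr_right]
        rw [show (∑ j' : Fin 3, f (c, Sum.inl j')) = (P (e (c, false))).sum from mget_sum _ (hPcard _)]
        exact hPsum _
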